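/- Let K be a nontrivially normed field, let g ≥ 1, let p ∈ K, and let a ∈ K. Let L : K × K → K be (Fréchet) differentiable at (a, 0) and suppose: (i) there is a neighborhood U of a such that L(k, k − a) = 0 for all k ∈ U (vanishing along the line of trivial zeros); (ii) there are functions B₁, …, B_g : K → K and L* : K → K, all differentiable at a, with B_i(a) ≠ 0 for all i and B_g(a) = 1, such that L(k, 0) = (∏_{i=1}^{g} (1 − B_i(k)⁻¹ · p^{g−i})) · L*(k) for all k in a neighborhood of a. Then the derivative at 0 of the one-variable function s ↦ L(a, s) equals −B_g′(a) · (∏_{i=1}^{g−1} (1 − B_i(a)⁻¹ · p^{g−i})) · L*(a). -/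

import Mathlib

open Finset

/-- Greenberg–Stevens: if the two-variable `p`-adic `L`-function
`L` vanishes along the line of trivial zeros and factors on the line `s = 0`
through the improved `L`-function `L*` with Euler factors `1 − B_i(k)⁻¹·p^(g−i)`
(the `g`-th of which has a trivial zero at `k = a`), then the derivative at `0`
of `s ↦ L(a, s)` equals
`−B_g′(a) · (∏_{i=1}^{g−1} (1 − B_i(a)⁻¹·p^(g−i))) · L*(a)`. -/
theorem greenberg_stevens_derivative
    (K : Type*) [NontriviallyNormedField K]
    (g : ℕ) (hg : 1 ≤ g) (p a : K)
    (L : K × K → K) (hL : DifferentiableAt K L (a, 0))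
    (hvan : ∃ U ∈ nhds a, ∀ k ∈ U, L (k, k - a) = 0)
    (B : ℕ → K → K) (Lstar : K → K)
    (hB : ∀ i ∈ Finset.Icc 1 g, DifferentiableAt K (B i) a)
    (hLstar : DifferentiableAt K Lstar a)
    (hBne : ∀ i ∈ Finset.Icc 1 g, B i a ≠ 0)
    (hBg : B g a = 1)
    (hfact : ∃ U ∈ nhds a, ∀ k ∈ U,
      L (k, 0) = (∏ i ∈ Finset.Icc 1 g, (1 - (B i k)⁻¹ * p ^ (g - i))) * Lstar k) :
    deriv (fun s => L (a, s)) 0 =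
      - (deriv (B g) a *
          (∏ i ∈ Finset.Icc 1 (g - 1), (1 - (B i a)⁻¹ * p ^ (g - i))) * Lstar a) := by
  obtain ⟨U, hU, hUf⟩ := hvan
  obtain ⟨V, hV, hVf⟩ := hfact
  set f := fderiv K L (a, 0) with hf
  have hLf : HasFDerivAt L f (a, 0) := hL.hasFDerivAt
  -- the map s ↦ (a, s)
  have hφ : HasDerivAt (fun s : K => ((a, s) : K × K)) ((0, 1) : K × K) 0 :=
    (hasDerivAt_const (0 : K) a).prodMk (hasDerivAt_id 0)
  have h1 : HasDerivAt (fun s => L (a, s)) (f (0, 1)) 0 := by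
    have := hLf.comp_hasDerivAt (0 : K) hφ
    simpa [Function.comp_def] using this
  -- the diagonal map k ↦ (k, k - a)
  have hψ : HasDerivAt (fun k : K => ((k, k - a) : K × K)) ((1, 1) : K × K) a := by
    have : HasDerivAt (fun k : K => k - a) 1 a := by
      simpa using (hasDerivAt_id a).sub_const a
    exact (hasDerivAt_id a).prodMk this
  have h2 : HasDerivAt (fun k => L (k, k - a)) (f (1, 1)) a := by
    have := hLf.comp_hasDerivAt_of_eq a hψ (by simp)
    simpa [Function.comp_def] using this
  have hf11 : f (1, 1) = 0 := by
    have hz : HasDerivAt (fun k => L (k, k - a)) 0 a := by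
      refine (hasDerivAt_const a (0 : K)).congr_of_eventuallyEq ?_
      filter_upwards [hU] with k hk using hUf k hk
    exact h2.unique hz
  -- the map k ↦ (k, 0)
  have hχ : HasDerivAt (fun k : K => ((k, 0) : K × K)) ((1, 0) : K × K) a :=
    (hasDerivAt_id a).prodMk (hasDerivAt_const a 0)
  have h3 : HasDerivAt (fun k => L (k, 0)) (f (1, 0)) a := by
    have := hLf.comp_hasDerivAt a hχ
    simpa [Function.comp_def] using this
  -- derivative of each Euler factor
  set h : ℕ → K → K := fun i k => 1 - (B i k)⁻¹ * p ^ (g - i) with hh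
  set d : ℕ → K := fun i => deriv (B i) a / (B i a) ^ 2 * p ^ (g - i) with hd
  have hfac : ∀ i ∈ Finset.Icc 1 g, HasDerivAt (h i) (d i) a := by
    intro i hi
    have hb := (hB i hi).hasDerivAt
    have hinv := hb.inv (hBne i hi)
    have := ((hinv.mul_const (p ^ (g - i))).const_sub 1)
    refine this.congr_deriv ?_
    simp only [hd]
    ring
  have hgmem : g ∈ Finset.Icc 1 g := Finset.mem_Icc.2 ⟨hg, le_refl g⟩
  have hga : h g a = 0 := by simp [hh, hBg, Nat.sub_self]
  have hprod : HasDerivAt (fun k => ∏ i ∈ Finset.Icc 1 g, h i k)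
      (∑ i ∈ Finset.Icc 1 g, (∏ j ∈ (Finset.Icc 1 g).erase i, h j a) • d i) a :=
    HasDerivAt.fun_finsetProd hfac
  have hPa : (∏ i ∈ Finset.Icc 1 g, h i a) = 0 :=
    Finset.prod_eq_zero hgmem hga
  have hsum : (∑ i ∈ Finset.Icc 1 g, (∏ j ∈ (Finset.Icc 1 g).erase i, h j a) • d i)
      = (∏ j ∈ Finset.Icc 1 (g - 1), h j a) * d g := by
    rw [Finset.sum_eq_single_of_mem g hgmem]
    · rw [smul_eq_mul, Finset.Icc_erase_right, ← Finset.Ico_add_one_right_eq_Icc,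
        Nat.sub_add_cancel hg]
    · intro b hb hbg
      have : g ∈ (Finset.Icc 1 g).erase b := Finset.mem_erase.2 ⟨hbg.symm, hgmem⟩
      rw [Finset.prod_eq_zero this hga, zero_smul]
  have hdg : d g = deriv (B g) a := by simp [hd, hBg, Nat.sub_self]
  have hF : HasDerivAt (fun k => (∏ i ∈ Finset.Icc 1 g, h i k) * Lstar k)
      (deriv (B g) a * (∏ j ∈ Finset.Icc 1 (g - 1), h j a) * Lstar a) a := by
    have := hprod.mul hLstar.hasDerivAt
    rw [hsum, hPa, hdg] at this
    refine this.congr_deriv ?_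
    ring
  have hf10 : f (1, 0) = deriv (B g) a *
      (∏ j ∈ Finset.Icc 1 (g - 1), h j a) * Lstar a := by
    refine h3.unique (hF.congr_of_eventuallyEq ?_)
    filter_upwards [hV] with k hk using hVf k hk
  have key : f (0, 1) = f (1, 1) - f (1, 0) := by
    rw [← f.map_sub, show ((1,1) : K × K) - (1,0) = (0,1) by simp [Prod.ext_iff]]
  rw [h1.deriv, key, hf11, hf10]
  ring
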